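/- Let θ₁ ∈ ℝ, v₁, v₂ ∈ ℝ, ξ : ℝ → ℝ, and let Γ : [0,∞) → [0,∞) be a continuous nondecreasing function with Γ(0) = 0 and Γ(x) → ∞ as x → ∞. Define the hazard ratio function r(x) = e^{−θ₁(v₁−v₂)} · (1 + e^{θ₁v₁+ξ(v₁)} Γ(x)) / (1 + e^{θ₁v₂+ξ(v₂)} Γ(x)) for x ≥ 0. Then: (i) r(0) = e^{−θ₁(v₁−v₂)}; (ii) lim_{x→∞} r(x) = e^{ξ(v₁)−ξ(v₂)}; (iii) r is nondecreasing on [0,∞) if and only if θ₁(v₁−v₂) ≥ ξ(v₂)−ξ(v₁), and nonincreasing if and only if θ₁(v₁−v₂) ≤ ξ(v₂)−ξ(v₁). -/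

import Mathlib

open Set

/-- Let `θ₁, v₁, v₂ ∈ ℝ`, `ξ : ℝ → ℝ`, and let `Γ : [0,∞) → [0,∞)` be a
continuous nondecreasing function with `Γ(0) = 0` and `Γ(x) → ∞` as `x → ∞`. Define
the hazard ratio function
`r(x) = e^{−θ₁(v₁−v₂)} · (1 + e^{θ₁v₁+ξ(v₁)} Γ(x)) / (1 + e^{θ₁v₂+ξ(v₂)} Γ(x))` for
`x ≥ 0`. Then: (i) `r(0) = e^{−θ₁(v₁−v₂)}`; (ii) `lim_{x→∞} r(x) = e^{ξ(v₁)−ξ(v₂)}`;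
(iii) `r` is nondecreasing on `[0,∞)` iff `θ₁(v₁−v₂) ≥ ξ(v₂)−ξ(v₁)`, and nonincreasing
iff `θ₁(v₁−v₂) ≤ ξ(v₂)−ξ(v₁)`. -/
theorem stmt_6 (θ₁ v₁ v₂ : ℝ) (ξ : ℝ → ℝ) (Γ : ℝ → ℝ)
    (hΓcont : ContinuousOn Γ (Ici 0)) (hΓmono : MonotoneOn Γ (Ici 0))
    (hΓ0 : Γ 0 = 0) (hΓtop : Filter.Tendsto Γ Filter.atTop Filter.atTop)
    (r : ℝ → ℝ)
    (hr : ∀ x : ℝ, r x = Real.exp (-(θ₁ * (v₁ - v₂))) *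
      (1 + Real.exp (θ₁ * v₁ + ξ v₁) * Γ x) / (1 + Real.exp (θ₁ * v₂ + ξ v₂) * Γ x)) :
    r 0 = Real.exp (-(θ₁ * (v₁ - v₂))) ∧
    Filter.Tendsto r Filter.atTop (nhds (Real.exp (ξ v₁ - ξ v₂))) ∧
    (MonotoneOn r (Ici 0) ↔ ξ v₂ - ξ v₁ ≤ θ₁ * (v₁ - v₂)) ∧
    (AntitoneOn r (Ici 0) ↔ θ₁ * (v₁ - v₂) ≤ ξ v₂ - ξ v₁) := by
  set C := Real.exp (-(θ₁ * (v₁ - v₂))) with hC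
  set A := Real.exp (θ₁ * v₁ + ξ v₁) with hA
  set B := Real.exp (θ₁ * v₂ + ξ v₂) with hB
  have hCpos : 0 < C := Real.exp_pos _
  have hApos : 0 < A := Real.exp_pos _
  have hBpos : 0 < B := Real.exp_pos _
  have hΓnn : ∀ x, 0 ≤ x → 0 ≤ Γ x := fun x hx => by
    have := hΓmono (self_mem_Ici) hx hx
    rwa [hΓ0] at this
  have hden : ∀ u : ℝ, 0 ≤ u → 0 < 1 + B * u := fun u hu => by nlinarith
  -- condition equivalence
  have hcond : (ξ v₂ - ξ v₁ ≤ θ₁ * (v₁ - v₂)) ↔ B ≤ A := by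
    rw [hA, hB, Real.exp_le_exp]; constructor <;> intro h <;> linarith
  have hcond' : (θ₁ * (v₁ - v₂) ≤ ξ v₂ - ξ v₁) ↔ A ≤ B := by
    rw [hA, hB, Real.exp_le_exp]; constructor <;> intro h <;> linarith
  have hr0 : r 0 = C := by
    rw [hr, hΓ0]; field_simp; ring
  refine ⟨hr0, ?_, ?_, ?_⟩
  · -- limit
    have hlim : Filter.Tendsto (fun t : ℝ => C * (1 + A * t) / (1 + B * t))
        Filter.atTop (nhds (C * A / B)) := by
      have h1 : Filter.Tendsto (fun t : ℝ => C * (t⁻¹ + A) / (t⁻¹ + B))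
          Filter.atTop (nhds (C * (0 + A) / (0 + B))) := by
        apply Filter.Tendsto.div
        · exact (tendsto_const_nhds.mul (tendsto_inv_atTop_zero.add tendsto_const_nhds))
        · exact tendsto_inv_atTop_zero.add tendsto_const_nhds
        · positivity
      have heq : (fun t : ℝ => C * (t⁻¹ + A) / (t⁻¹ + B)) =ᶠ[Filter.atTop]
          (fun t : ℝ => C * (1 + A * t) / (1 + B * t)) := by
        filter_upwards [Filter.eventually_gt_atTop 0] with t ht
        field_simp
      have := h1.congr' heq
      simpa using this
    have hrfl : r =ᶠ[Filter.atTop] (fun x => C * (1 + A * Γ x) / (1 + B * Γ x)) := by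
      filter_upwards with x; exact hr x
    have := (hlim.comp hΓtop).congr' hrfl.symm
    have hval : C * A / B = Real.exp (ξ v₁ - ξ v₂) := by
      rw [hC, hA, hB, ← Real.exp_add, ← Real.exp_sub]
      ring_nf
    rwa [hval] at this
  · -- monotone iff
    constructor
    · intro hmono
      rw [hcond]
      obtain ⟨N, hN⟩ := Filter.eventually_atTop.mp (Filter.tendsto_atTop.mp hΓtop 1)
      set x := max N 0 with hx
      have hx0 : (0:ℝ) ≤ x := le_max_right _ _
      have hΓx : 1 ≤ Γ x := hN x (le_max_left _ _)
      have h := hmono (self_mem_Ici) (mem_Ici.mpr hx0) hx0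
      rw [hr0, hr] at h
      have hd := hden (Γ x) (hΓnn x hx0)
      rw [le_div_iff₀ hd] at h
      have h2 : C * (B * Γ x) ≤ C * (A * Γ x) := by nlinarith
      have h3 := le_of_mul_le_mul_left h2 hCpos
      exact le_of_mul_le_mul_right h3 (lt_of_lt_of_le one_pos hΓx)
    · intro h
      rw [hcond] at h
      intro a ha b hb hab
      rw [hr, hr]
      have hΓab := hΓmono ha hb hab
      have h1 := hΓnn a ha
      have h2 := hΓnn b hb
      rw [div_le_div_iff₀ (hden _ h1) (hden _ h2)]
      nlinarith [mul_nonneg (mul_nonneg hCpos.le (sub_nonneg.mpr h)) (sub_nonneg.mpr hΓab)]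
  · -- antitone iff
    constructor
    · intro hanti
      rw [hcond']
      obtain ⟨N, hN⟩ := Filter.eventually_atTop.mp (Filter.tendsto_atTop.mp hΓtop 1)
      set x := max N 0 with hx
      have hx0 : (0:ℝ) ≤ x := le_max_right _ _
      have hΓx : 1 ≤ Γ x := hN x (le_max_left _ _)
      have h := hanti (self_mem_Ici) (mem_Ici.mpr hx0) hx0
      rw [hr0, hr] at h
      have hd := hden (Γ x) (hΓnn x hx0)
      rw [div_le_iff₀ hd] at h
      have h2 : C * (A * Γ x) ≤ C * (B * Γ x) := by nlinarith
      have h3 := le_of_mul_le_mul_left h2 hCpos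
      exact le_of_mul_le_mul_right h3 (lt_of_lt_of_le one_pos hΓx)
    · intro h
      rw [hcond'] at h
      intro a ha b hb hab
      rw [hr, hr]
      have hΓab := hΓmono ha hb hab
      have h1 := hΓnn a ha
      have h2 := hΓnn b hb
      rw [div_le_div_iff₀ (hden _ h2) (hden _ h1)]
      nlinarith [mul_nonneg (mul_nonneg hCpos.le (sub_nonneg.mpr h)) (sub_nonneg.mpr hΓab)]
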